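/- Let r = (r_x, r_y, r_z) ∈ ℝ³ with |r|² = r_x² + r_y² + r_z² ≤ 1, and define the three qubit density matrices ρ₁ = (1/2)·[[1 + r_z, r_x − i r_y], [r_x + i r_y, 1 − r_z]], ρ₂ = (1/2)·[[1 + r_y, r_z − i r_x], [r_z + i r_x, 1 − r_y]], ρ₃ = (1/2)·[[1 + r_x, r_y − i r_z], [r_y + i r_z, 1 − r_x]] (the representations of the same state under three mutually unbiased bases). Then (1 − M_Re(ρ₁))² + (1 − M_Re(ρ₂))² + (1 − M_Re(ρ₃))² ≥ ( √((1 − |r|²)(3 − 2|r|²)) + 3 + 2|r|² )/2, and equality holds if and only if |r| = 1 (i.e. the state is pure). -/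

import Mathlib

open Matrix Complex ComplexOrder Classical

/-- The positive semidefinite square root of a matrix (junk value `0` if not PSD). -/
noncomputable def psqrt {n : Type*} [Fintype n] [DecidableEq n] (A : Matrix n n ℂ) :
    Matrix n n ℂ :=
  if h : A.PosSemidef then (h.1.eigenvectorUnitary : Matrix n n ℂ) *
    diagonal ((↑) ∘ (Real.sqrt ·) ∘ h.1.eigenvalues) * (star h.1.eigenvectorUnitary : Matrix n n ℂ) else 0

/-- Entrywise complex conjugate of a matrix. -/
def mconj {m n : Type*} (A : Matrix m n ℂ) : Matrix m n ℂ := A.map (starRingEnd ℂ)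

/-- Fidelity `F(ρ,σ) = Tr √(√ρ σ √ρ)`. -/
noncomputable def fidelity {n : Type*} [Fintype n] [DecidableEq n] (ρ σ : Matrix n n ℂ) : ℝ :=
  ((psqrt (psqrt ρ * σ * psqrt ρ)).trace).re

/-- The real part state `Re(ρ) = (ρ + ρ*)/2`. -/
noncomputable def reState {n : Type*} (ρ : Matrix n n ℂ) : Matrix n n ℂ :=
  ((1 : ℂ)/2) • (ρ + mconj ρ)

/-- The imaginarity measure `M_Re(ρ) = 1 - F(ρ, Re(ρ))`. -/
noncomputable def MRe {n : Type*} [Fintype n] [DecidableEq n] (ρ : Matrix n n ℂ) : ℝ :=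
  1 - fidelity ρ (reState ρ)

/-- A density matrix: positive semidefinite with trace 1. -/
def IsDensityMatrix {n : Type*} [Fintype n] (ρ : Matrix n n ℂ) : Prop :=
  ρ.PosSemidef ∧ ρ.trace = 1

/-! ### Auxiliary lemmas -/

section
open scoped MatrixOrder

lemma psqrt_eq_sqrt {n : Type*} [Fintype n] [DecidableEq n] {A : Matrix n n ℂ}
    (h : A.PosSemidef) : psqrt A = CFC.sqrt A := by
  rw [psqrt, dif_pos h, CFC.sqrt_eq_cfc, cfc_nnreal_eq_real _ A, h.1.cfc_eq]
  simp only [IsHermitian.cfc, Real.coe_sqrt, Real.coe_toNNReal', Unitary.conjStarAlgAut_apply]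
  congr 3
  funext i
  simp [max_eq_left (h.eigenvalues_nonneg i)]

lemma psqrt_psd {n : Type*} [Fintype n] [DecidableEq n] {A : Matrix n n ℂ}
    (h : A.PosSemidef) : (psqrt A).PosSemidef := by
  rw [psqrt_eq_sqrt h]; exact (CFC.sqrt_nonneg A).posSemidef

lemma psqrt_mul_self {n : Type*} [Fintype n] [DecidableEq n] {A : Matrix n n ℂ}
    (h : A.PosSemidef) : psqrt A * psqrt A = A := by
  rw [psqrt_eq_sqrt h]; exact CFC.sqrt_mul_sqrt_self A h.nonneg

end

/-- Cayley–Hamilton for `2 × 2` matrices. -/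
lemma aux_ch2 (C : Matrix (Fin 2) (Fin 2) ℂ) : C * C = C.trace • C - C.det • 1 := by
  ext i j
  fin_cases i <;> fin_cases j <;>
    simp [Matrix.mul_apply, Fin.sum_univ_two, Matrix.trace_fin_two, Matrix.det_fin_two,
      Matrix.one_apply] <;> ring

lemma aux_psd_trace_nonneg {n : Type*} [Fintype n] [DecidableEq n] {A : Matrix n n ℂ}
    (hA : A.PosSemidef) : 0 ≤ A.trace := by
  rw [Matrix.trace]
  apply Finset.sum_nonneg
  intro i _
  exact hA.diag_nonneg

lemma aux_psd_det_nonneg {n : Type*} [Fintype n] [DecidableEq n] {A : Matrix n n ℂ}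
    (hA : A.PosSemidef) : 0 ≤ A.det := by
  rw [hA.1.det_eq_prod_eigenvalues]
  have h : (0:ℝ) ≤ ∏ i, hA.1.eigenvalues i :=
    Finset.prod_nonneg fun i _ => hA.eigenvalues_nonneg i
  norm_cast

lemma aux_trace_psqrt_fin2 {M : Matrix (Fin 2) (Fin 2) ℂ} (hM : M.PosSemidef) :
    (psqrt M).trace.re = Real.sqrt (M.trace.re + 2 * Real.sqrt M.det.re) := by
  set B := psqrt M with hB
  have hBP : B.PosSemidef := psqrt_psd hM
  have hBB : B * B = M := psqrt_mul_self hM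
  have hch : B * B = B.trace • B - B.det • 1 := aux_ch2 B
  have htr : M.trace = B.trace ^ 2 - 2 * B.det := by
    rw [← hBB, hch]
    simp [Matrix.trace_smul, Matrix.trace_sub, Matrix.trace_one, Matrix.trace_fin_two]
    ring
  have hdet : M.det = B.det ^ 2 := by rw [← hBB, Matrix.det_mul]; ring
  have htr0 : 0 ≤ B.trace := aux_psd_trace_nonneg hBP
  have hdet0 : 0 ≤ B.det := aux_psd_det_nonneg hBP
  have htrim : B.trace.im = 0 := by
    rw [Complex.le_def] at htr0; exact htr0.2.symm
  have hdetim : B.det.im = 0 := by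
    rw [Complex.le_def] at hdet0; exact hdet0.2.symm
  have htrre : 0 ≤ B.trace.re := by rw [Complex.le_def] at htr0; exact htr0.1
  have hdetre : 0 ≤ B.det.re := by rw [Complex.le_def] at hdet0; exact hdet0.1
  have h1 : Real.sqrt M.det.re = B.det.re := by
    have : M.det.re = B.det.re ^ 2 := by
      rw [hdet]; simp [Complex.ext_iff, pow_two, Complex.mul_re, hdetim]
    rw [this, Real.sqrt_sq hdetre]
  have h2 : M.trace.re = B.trace.re ^ 2 - 2 * B.det.re := by
    rw [htr]; simp [Complex.ext_iff, pow_two, Complex.mul_re, htrim, Complex.sub_re]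
  rw [h1, h2]
  have : B.trace.re ^ 2 - 2 * B.det.re + 2 * B.det.re = B.trace.re ^ 2 := by ring
  rw [this, Real.sqrt_sq htrre]

lemma aux_fidelity_fin2 {ρ σ : Matrix (Fin 2) (Fin 2) ℂ} (hρ : ρ.PosSemidef)
    (hσ : σ.PosSemidef) :
    fidelity ρ σ = Real.sqrt ((σ * ρ).trace.re + 2 * Real.sqrt ((ρ.det * σ.det).re)) := by
  rw [fidelity]
  set B := psqrt ρ with hB
  have hBP : B.PosSemidef := psqrt_psd hρ
  have hBB : B * B = ρ := psqrt_mul_self hρ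
  have hBH : Bᴴ = B := hBP.1
  have hMP : (B * σ * B).PosSemidef := by
    have := hσ.conjTranspose_mul_mul_same B
    rwa [hBH] at this
  rw [aux_trace_psqrt_fin2 hMP]
  congr 2
  · rw [mul_assoc, Matrix.trace_mul_comm, mul_assoc, hBB, Matrix.trace_mul_comm]
  · congr 1
    have h1 : (B * σ * B).det = B.det * σ.det * B.det := by
      rw [Matrix.det_mul, Matrix.det_mul]
    rw [h1]
    have h2 : ρ.det = B.det * B.det := by rw [← hBB, Matrix.det_mul]
    rw [h2]; ring_nf

lemma aux_quadpos (u v w a b c d : ℝ) (h : u^2+v^2+w^2 ≤ 1) :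
    0 ≤ (1+w)*(a^2+b^2) + (1-w)*(c^2+d^2) + 2*(u*(a*c+b*d)+v*(a*d-b*c)) := by
  have hw1 : w^2 ≤ 1 := by nlinarith [sq_nonneg u, sq_nonneg v]
  set X := (1+w)*(a^2+b^2) with hXdef
  set Y := (1-w)*(c^2+d^2) with hYdef
  set C := u*(a*c+b*d)+v*(a*d-b*c) with hCdef
  have hX : 0 ≤ X := by
    apply mul_nonneg _ (by positivity)
    nlinarith [sq_nonneg (1+w)]
  have hY : 0 ≤ Y := by
    apply mul_nonneg _ (by positivity)
    nlinarith [sq_nonneg (1-w)]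
  have hC : C^2 ≤ X*Y := by
    have h1 : C^2 ≤ (u^2+v^2) * ((a*c+b*d)^2+(a*d-b*c)^2) := by
      rw [hCdef]
      nlinarith [sq_nonneg (u*(a*d-b*c) - v*(a*c+b*d))]
    have h2 : (a*c+b*d)^2+(a*d-b*c)^2 = (a^2+b^2)*(c^2+d^2) := by ring
    have h3 : X*Y = (1-w^2)*((a^2+b^2)*(c^2+d^2)) := by rw [hXdef, hYdef]; ring
    rw [h3]
    calc C^2 ≤ (u^2+v^2) * ((a^2+b^2)*(c^2+d^2)) := by rw [← h2]; exact h1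
      _ ≤ (1-w^2)*((a^2+b^2)*(c^2+d^2)) := by
          apply mul_le_mul_of_nonneg_right (by nlinarith) (by positivity)
  nlinarith [hX, hY, hC, sq_nonneg (X-Y), sq_nonneg (X+Y+2*C), sq_nonneg (X+Y-2*C),
    mul_nonneg hX hY]

/-- The Bloch-form qubit matrix. -/
noncomputable def rhoM (u v w : ℝ) : Matrix (Fin 2) (Fin 2) ℂ :=
  ((1:ℂ)/2) • !![1 + (w:ℂ), (u:ℂ) - Complex.I * (v:ℂ); (u:ℂ) + Complex.I * (v:ℂ), 1 - (w:ℂ)]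

lemma aux_reState_rhoM (u v w : ℝ) : reState (rhoM u v w) = rhoM u 0 w := by
  ext i j
  fin_cases i <;> fin_cases j <;>
    simp [reState, mconj, rhoM, Complex.ext_iff] <;> ring

lemma aux_rhoM_psd (u v w : ℝ) (h : u^2 + v^2 + w^2 ≤ 1) : (rhoM u v w).PosSemidef := by
  refine Matrix.PosSemidef.of_dotProduct_mulVec_nonneg ?_ ?_
  · ext i j
    fin_cases i <;> fin_cases j <;>
      simp [rhoM, Matrix.conjTranspose_apply, Complex.ext_iff]
  · intro x
    rw [Complex.le_def]
    obtain ⟨⟨a, b⟩, hx0⟩ : ∃ z, x 0 = z := ⟨x 0, rfl⟩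
    obtain ⟨⟨c, d⟩, hx1⟩ : ∃ z, x 1 = z := ⟨x 1, rfl⟩
    have key := aux_quadpos u v w a b c d h
    constructor
    · simp [rhoM, dotProduct, Matrix.mulVec, Fin.sum_univ_two, hx0, hx1,
        Complex.ext_iff, Complex.mul_re, Complex.mul_im]
      nlinarith [key]
    · simp [rhoM, dotProduct, Matrix.mulVec, Fin.sum_univ_two, hx0, hx1,
        Complex.ext_iff, Complex.mul_re, Complex.mul_im]
      ring

lemma aux_fid_sq (u v w : ℝ) (h : u^2+v^2+w^2 ≤ 1) :
    fidelity (rhoM u v w) (reState (rhoM u v w)) ^ 2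
      = (1 + u^2 + w^2)/2
        + Real.sqrt ((1-(u^2+v^2+w^2)) * (1-(u^2+v^2+w^2)+v^2))/2 := by
  have h0 : u^2 + 0^2 + w^2 ≤ 1 := by nlinarith [sq_nonneg v]
  rw [aux_reState_rhoM]
  rw [aux_fidelity_fin2 (aux_rhoM_psd u v w h) (aux_rhoM_psd u 0 w h0)]
  have hT : ((rhoM u 0 w) * (rhoM u v w)).trace.re = (1+u^2+w^2)/2 := by
    simp [rhoM, Matrix.trace_fin_two, Matrix.mul_apply, Fin.sum_univ_two]
    ring
  have hD : ((rhoM u v w).det * (rhoM u 0 w).det).re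
      = ((1-(u^2+v^2+w^2)) * (1-(u^2+v^2+w^2)+v^2))/16 := by
    simp [rhoM, Matrix.det_fin_two, Complex.ext_iff]
    ring
  set K := (1-(u^2+v^2+w^2)) * (1-(u^2+v^2+w^2)+v^2) with hKdef
  have hK : 0 ≤ K := by
    apply mul_nonneg (by linarith) (by nlinarith [sq_nonneg v])
  rw [hT, hD]
  have h16 : Real.sqrt (K/16) = Real.sqrt K / 4 := by
    rw [show K/16 = K * (1/4:ℝ)^2 by ring, Real.sqrt_mul hK, Real.sqrt_sq (by norm_num)]
    ring
  rw [h16]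
  rw [Real.sq_sqrt (by positivity)]
  ring

lemma aux_sqrt_add3 (A B C : ℝ) (hA : 0 ≤ A) (hB : 0 ≤ B) (hC : 0 ≤ C) :
    Real.sqrt (A + B + C) ≤ Real.sqrt A + Real.sqrt B + Real.sqrt C := by
  have h1 : A + B + C ≤ (Real.sqrt A + Real.sqrt B + Real.sqrt C)^2 := by
    nlinarith [Real.sq_sqrt hA, Real.sq_sqrt hB, Real.sq_sqrt hC,
      Real.sqrt_nonneg A, Real.sqrt_nonneg B, Real.sqrt_nonneg C,
      mul_nonneg (Real.sqrt_nonneg A) (Real.sqrt_nonneg B),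
      mul_nonneg (Real.sqrt_nonneg A) (Real.sqrt_nonneg C),
      mul_nonneg (Real.sqrt_nonneg B) (Real.sqrt_nonneg C)]
  calc Real.sqrt (A + B + C) ≤ Real.sqrt ((Real.sqrt A + Real.sqrt B + Real.sqrt C)^2) :=
        Real.sqrt_le_sqrt h1
    _ = Real.sqrt A + Real.sqrt B + Real.sqrt C := Real.sqrt_sq (by positivity)

set_option maxHeartbeats 1000000 in
theorem stmt17 (rx ry rz : ℝ) (hr : rx ^ 2 + ry ^ 2 + rz ^ 2 ≤ 1) :
    (1 - MRe (((1:ℂ)/2) • !![1 + (rz:ℂ), (rx:ℂ) - Complex.I * (ry:ℂ); (rx:ℂ) + Complex.I * (ry:ℂ), 1 - (rz:ℂ)] : Matrix (Fin 2) (Fin 2) ℂ)) ^ 2 + (1 - MRe (((1:ℂ)/2) • !![1 + (ry:ℂ), (rz:ℂ) - Complex.I * (rx:ℂ); (rz:ℂ) + Complex.I * (rx:ℂ), 1 - (ry:ℂ)] : Matrix (Fin 2) (Fin 2) ℂ)) ^ 2 + (1 - MRe (((1:ℂ)/2) • !![1 + (rx:ℂ), (ry:ℂ) - Complex.I * (rz:ℂ);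 (ry:ℂ) + Complex.I * (rz:ℂ), 1 - (rx:ℂ)] : Matrix (Fin 2) (Fin 2) ℂ)) ^ 2 ≥
      (Real.sqrt ((1 - (rx ^ 2 + ry ^ 2 + rz ^ 2)) * (3 - 2 * (rx ^ 2 + ry ^ 2 + rz ^ 2))) + 3 + 2 * (rx ^ 2 + ry ^ 2 + rz ^ 2)) / 2 ∧
    ((1 - MRe (((1:ℂ)/2) • !![1 + (rz:ℂ), (rx:ℂ) - Complex.I * (ry:ℂ); (rx:ℂ) + Complex.I * (ry:ℂ), 1 - (rz:ℂ)] : Matrix (Fin 2) (Fin 2) ℂ)) ^ 2 + (1 - MRe (((1:ℂ)/2) • !![1 + (ry:ℂ), (rz:ℂ) - Complex.I * (rx:ℂ); (rz:ℂ) + Complex.I * (rx:ℂ), 1 - (ry:ℂ)] : Matrix (Fin 2) (Fin 2) ℂ)) ^ 2 + (1 - MRe (((1:ℂ)/2) • !![1 + (rx:ℂ), (ry:ℂ) - Complex.I * (rz:ℂ); (ry:ℂ) + Complex.I * (rz:ℂ), 1 - (rx:ℂ)] : Matrix (Fin 2) (Fin 2) ℂ)) ^ 2 =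
      (Real.sqrt ((1 - (rx ^ 2 + ry ^ 2 + rz ^ 2)) * (3 - 2 * (rx ^ 2 + ry ^ 2 + rz ^ 2))) + 3 + 2 * (rx ^ 2 + ry ^ 2 + rz ^ 2)) / 2 ↔ rx ^ 2 + ry ^ 2 + rz ^ 2 = 1) := by
  have hMRe : ∀ (M : Matrix (Fin 2) (Fin 2) ℂ),
      1 - MRe M = fidelity M (reState M) := fun M => by rw [MRe]; ring
  have e1 : (((1:ℂ)/2) • !![1 + (rz:ℂ), (rx:ℂ) - Complex.I * (ry:ℂ); (rx:ℂ) + Complex.I * (ry:ℂ), 1 - (rz:ℂ)] : Matrix (Fin 2) (Fin 2) ℂ) = rhoM rx ry rz := rfl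
  have e2 : (((1:ℂ)/2) • !![1 + (ry:ℂ), (rz:ℂ) - Complex.I * (rx:ℂ); (rz:ℂ) + Complex.I * (rx:ℂ), 1 - (ry:ℂ)] : Matrix (Fin 2) (Fin 2) ℂ) = rhoM rz rx ry := rfl
  have e3 : (((1:ℂ)/2) • !![1 + (rx:ℂ), (ry:ℂ) - Complex.I * (rz:ℂ); (ry:ℂ) + Complex.I * (rz:ℂ), 1 - (rx:ℂ)] : Matrix (Fin 2) (Fin 2) ℂ) = rhoM ry rz rx := rfl
  rw [e1, e2, e3, hMRe, hMRe, hMRe]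
  have hr2 : rz^2 + rx^2 + ry^2 ≤ 1 := by linarith
  have hr3 : ry^2 + rz^2 + rx^2 ≤ 1 := by linarith
  have f1 := aux_fid_sq rx ry rz hr
  have f2 := aux_fid_sq rz rx ry hr2
  have f3 := aux_fid_sq ry rz rx hr3
  rw [f1, f2, f3]
  clear f1 f2 f3 e1 e2 e3 hMRe
  rw [show rz^2+rx^2+ry^2 = rx^2+ry^2+rz^2 by ring] at *
  rw [show ry^2+rz^2+rx^2 = rx^2+ry^2+rz^2 by ring] at *
  set t := rx^2 + ry^2 + rz^2 with htdef
  set q1 := Real.sqrt ((1-t) * (1-t+ry^2)) with hq1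
  set q2 := Real.sqrt ((1-t) * (1-t+rx^2)) with hq2
  set q3 := Real.sqrt ((1-t) * (1-t+rz^2)) with hq3
  have ht0 : 0 ≤ t := by positivity
  have hsum : (1-t)*(1-t+ry^2) + (1-t)*(1-t+rx^2) + (1-t)*(1-t+rz^2)
      = (1-t)*(3-2*t) := by rw [htdef]; ring
  have hA : (0:ℝ) ≤ (1-t)*(1-t+ry^2) := by
    apply mul_nonneg (by linarith)
    nlinarith [sq_nonneg rx, sq_nonneg rz]
  have hB : (0:ℝ) ≤ (1-t)*(1-t+rx^2) := by
    apply mul_nonneg (by linarith)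
    nlinarith [sq_nonneg ry, sq_nonneg rz]
  have hC : (0:ℝ) ≤ (1-t)*(1-t+rz^2) := by
    apply mul_nonneg (by linarith)
    nlinarith [sq_nonneg rx, sq_nonneg ry]
  have hkey : Real.sqrt ((1-t)*(3-2*t)) ≤ q1 + q2 + q3 := by
    rw [← hsum]
    exact aux_sqrt_add3 _ _ _ hA hB hC
  have hdiag : (1+rx^2+rz^2)/2 + (1+rz^2+ry^2)/2 + (1+ry^2+rx^2)/2 = (3 + 2*t)/2 := by
    rw [htdef]; ring
  constructor
  · -- inequality
    linarith [hkey]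
  · constructor
    · -- equality implies t = 1
      intro heq
      by_contra hne
      have ht1 : t < 1 := lt_of_le_of_ne hr hne
      -- strict inequality
      have hq1' : 1 - t ≤ q1 := by
        rw [hq1]
        have : (1-t)^2 ≤ (1-t)*(1-t+ry^2) := by
          have hxy : (1-t)*(1-t+ry^2) = (1-t)^2 + (1-t)*ry^2 := by ring
          have hnn : 0 ≤ (1-t)*ry^2 :=
            mul_nonneg (by linarith) (sq_nonneg ry)
          linarith
        calc 1 - t = Real.sqrt ((1-t)^2) := (Real.sqrt_sq (by linarith)).symm
          _ ≤ _ := Real.sqrt_le_sqrt this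
      have hq2' : 1 - t ≤ q2 := by
        rw [hq2]
        have : (1-t)^2 ≤ (1-t)*(1-t+rx^2) := by
          have hxy : (1-t)*(1-t+rx^2) = (1-t)^2 + (1-t)*rx^2 := by ring
          have hnn : 0 ≤ (1-t)*rx^2 :=
            mul_nonneg (by linarith) (sq_nonneg rx)
          linarith
        calc 1 - t = Real.sqrt ((1-t)^2) := (Real.sqrt_sq (by linarith)).symm
          _ ≤ _ := Real.sqrt_le_sqrt this
      have hq3' : 1 - t ≤ q3 := by
        rw [hq3]
        have : (1-t)^2 ≤ (1-t)*(1-t+rz^2) := by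
          have hxy : (1-t)*(1-t+rz^2) = (1-t)^2 + (1-t)*rz^2 := by ring
          have hnn : 0 ≤ (1-t)*rz^2 :=
            mul_nonneg (by linarith) (sq_nonneg rz)
          linarith
        calc 1 - t = Real.sqrt ((1-t)^2) := (Real.sqrt_sq (by linarith)).symm
          _ ≤ _ := Real.sqrt_le_sqrt this
      have hq1sq : q1^2 = (1-t)*(1-t+ry^2) := Real.sq_sqrt hA
      have hq2sq : q2^2 = (1-t)*(1-t+rx^2) := Real.sq_sqrt hB
      have hq3sq : q3^2 = (1-t)*(1-t+rz^2) := Real.sq_sqrt hC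
      have hstrict : Real.sqrt ((1-t)*(3-2*t)) < q1 + q2 + q3 := by
        have hS : 0 < q1 + q2 + q3 := by linarith
        have hc12 : (1-t)*(1-t) ≤ q1*q2 := mul_le_mul hq1' hq2' (by linarith) (by linarith)
        have hc13 : (1-t)*(1-t) ≤ q1*q3 := mul_le_mul hq1' hq3' (by linarith) (by linarith)
        have hc23 : (1-t)*(1-t) ≤ q2*q3 := mul_le_mul hq2' hq3' (by linarith) (by linarith)
        have hexp : (q1+q2+q3)^2 = q1^2+q2^2+q3^2 + 2*(q1*q2) + 2*(q1*q3) + 2*(q2*q3) := by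
          ring
        have hpos : 0 < (1-t)*(1-t) := mul_pos (by linarith) (by linarith)
        have harg : (1-t)*(3-2*t) < (q1+q2+q3)^2 := by
          rw [hexp, hq1sq, hq2sq, hq3sq, ← hsum]
          linarith
        calc Real.sqrt ((1-t)*(3-2*t)) < Real.sqrt ((q1+q2+q3)^2) := by
              apply Real.sqrt_lt_sqrt (by rw [← hsum]; linarith [hA, hB, hC]) harg
          _ = q1 + q2 + q3 := Real.sqrt_sq (by linarith)
      linarith [hstrict, heq]
    · -- t = 1 implies equality
      intro ht1
      have hz : (1:ℝ) - t = 0 := by linarith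
      rw [hq1, hq2, hq3, hz]
      have ht1' : rx^2+ry^2+rz^2 = 1 := by rw [← htdef]; exact ht1
      simp
      linarith
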